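/- 3-SAT where every clause contains exactly one true literal ('1-in-3-SAT without negated variables') reduces to the following word problem: given finite sets B₁,…,Bₙ of variables from {x₁,…,x_N} and assignments of each variable to one of two tokens a or b, there is a choice selecting for each clause exactly one 'a'-token iff the corresponding instance is 1-in-3 satisfiable. Concretely: for clauses c₁,…,c_m over variables x₁,…,x_N (no negations), there is an assignment σ : {x₁,…,x_N} → {a,b} such that every clause cᵢ = {y_{i,1}, y_{i,2}, y_{i,3}} has exactly one j with σ(y_{i,j}) = a, if and only if for the associated MFA M of the reduction, the word (aab)^N (ab)^m is accepted by M. -/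

import Mathlib

/-- The two tokens a and b. -/
inductive AB where
  | a | b
deriving DecidableEq

/-- The token word contributed by a variable v under assignment σ:
the letter a if σ v is true (the memory of v stores 'a'), nothing otherwise. -/
def tok {N : ℕ} (σ : Fin N → Bool) (v : Fin N) : List AB :=
  if σ v then [AB.a] else []

/-- The word consumed while processing clause j = {y₁, y₂, y₃}: the contents of
the three memories, followed by the letter b. -/
def clauseWord {N m : ℕ} (σ : Fin N → Bool) (c : Fin m → Fin 3 → Fin N)
    (j : Fin m) : List AB :=
  tok σ (c j 0) ++ tok σ (c j 1) ++ tok σ (c j 2) ++ [AB.b]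

/-- The complete word consumed by the automaton of the reduction under the
nondeterministic choice σ: N blocks aab, then the m clause words. -/
def fullWord {N m : ℕ} (σ : Fin N → Bool) (c : Fin m → Fin 3 → Fin N) : List AB :=
  (List.ofFn fun _ : Fin N => [AB.a, AB.a, AB.b]).flatten ++
  (List.ofFn fun j : Fin m => clauseWord σ c j).flatten

lemma key (L : List ℕ) :
    (L.map fun k => List.replicate k AB.a ++ [AB.b]).flatten =
      (List.replicate L.length ([AB.a, AB.b])).flatten ↔ ∀ k ∈ L, k = 1 := by
  induction L with
  | nil => simp
  | cons k t ih =>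
    constructor
    · intro h
      simp only [List.map_cons, List.flatten_cons, List.length_cons,
        List.replicate_succ] at h
      match k with
      | 0 => simp at h
      | 1 =>
        simp only [List.replicate_one] at h
        simp only [List.cons_append, List.nil_append, List.cons.injEq] at h
        intro x hx
        rcases List.mem_cons.1 hx with rfl | hx
        · rfl
        · exact (ih.1 h.2.2) x hx
      | (n+2) =>
        simp [List.replicate_succ] at h
    · intro h
      have hk : k = 1 := h k List.mem_cons_self
      subst hk
      simp only [List.map_cons, List.flatten_cons, List.length_cons,
        List.replicate_succ, List.replicate_one]
      have := ih.2 (fun x hx => h x (List.mem_cons_of_mem _ hx))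
      simp [this]

lemma exu_iff (b : Fin 3 → Bool) :
    (∃! i : Fin 3, b i = true) ↔
      (b 0).toNat + (b 1).toNat + (b 2).toNat = 1 := by
  simp only [ExistsUnique]
  revert b; decide

/-- Correctness of the 1-in-3-SAT reduction: the instance (without negated
variables) given by clauses c has an assignment with exactly one true literal
per clause iff some nondeterministic choice σ makes the consumed word equal
(aab)^N (ab)^m, i.e. iff the MFA of the reduction accepts (aab)^N (ab)^m. -/
theorem one_in_three_sat_reduction {N m : ℕ} (c : Fin m → Fin 3 → Fin N) :
    (∃ σ : Fin N → Bool, ∀ j : Fin m, ∃! i : Fin 3, σ (c j i) = true) ↔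
    (∃ σ : Fin N → Bool,
        fullWord σ c =
          (List.ofFn fun _ : Fin N => [AB.a, AB.a, AB.b]).flatten ++
          (List.ofFn fun _ : Fin m => [AB.a, AB.b]).flatten) := by
  have hcw : ∀ (σ : Fin N → Bool) (j : Fin m),
      clauseWord σ c j =
        List.replicate ((σ (c j 0)).toNat + (σ (c j 1)).toNat + (σ (c j 2)).toNat)
          AB.a ++ [AB.b] := by
    intro σ j
    unfold clauseWord tok
    cases σ (c j 0) <;> cases σ (c j 1) <;> cases σ (c j 2) <;> rfl
  have hmain : ∀ σ : Fin N → Bool,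
      (∀ j : Fin m, ∃! i : Fin 3, σ (c j i) = true) ↔
      fullWord σ c =
        (List.ofFn fun _ : Fin N => [AB.a, AB.a, AB.b]).flatten ++
        (List.ofFn fun _ : Fin m => [AB.a, AB.b]).flatten := by
    intro σ
    unfold fullWord
    rw [List.append_right_inj]
    set L : List ℕ :=
      List.ofFn fun j : Fin m =>
        (σ (c j 0)).toNat + (σ (c j 1)).toNat + (σ (c j 2)).toNat with hL
    have h1 : (List.ofFn fun j : Fin m => clauseWord σ c j) =
        L.map fun k => List.replicate k AB.a ++ [AB.b] := by
      rw [hL, List.map_ofFn]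
      exact congrArg List.ofFn (funext fun j => hcw σ j)
    have h2 : (List.ofFn fun _ : Fin m => [AB.a, AB.b]) =
        List.replicate L.length ([AB.a, AB.b]) := by
      rw [hL, List.length_ofFn, List.ofFn_const]
    rw [h1, h2, key]
    constructor
    · intro h k hk
      rw [hL, List.mem_ofFn] at hk
      obtain ⟨j, rfl⟩ := hk
      exact (exu_iff _).1 (h j)
    · intro h j
      refine (exu_iff fun i => σ (c j i)).2 ?_
      exact h _ (by rw [hL, List.mem_ofFn]; exact ⟨j, rfl⟩)
  constructor
  · rintro ⟨σ, h⟩; exact ⟨σ, (hmain σ).1 h⟩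
  · rintro ⟨σ, h⟩; exact ⟨σ, (hmain σ).2 h⟩
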